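/- The posterior mean x_m = x₀ + Σ₀ Aᵀ S_m Λ_m⁻¹ S_mᵀ r₀ reproduces the observed information exactly: S_mᵀ A x_m = S_mᵀ b. -/

import Mathlib

open Matrix

lemma transpose_mul_posdef_mul {d m : ℕ}
    (Sig : Matrix (Fin d) (Fin d) ℝ) (hSig : Sig.PosDef)
    (M : Matrix (Fin d) (Fin m) ℝ) (hM : Function.Injective M.mulVec) :
    (Mᵀ * Sig * M).PosDef := by
  rw [posDef_iff_dotProduct_mulVec]
  constructor
  · have h : Mᵀ * Sig * M = Mᴴ * Sig * M := by
      rw [Matrix.conjTranspose_eq_transpose_of_trivial]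
    rw [h]
    exact isHermitian_conjTranspose_mul_mul M hSig.isHermitian
  · intro x hx
    have hMx : M *ᵥ x ≠ 0 := fun h => hx (hM (h.trans (M.mulVec_zero).symm))
    have hpos := (posDef_iff_dotProduct_mulVec.mp hSig).2 (x := M *ᵥ x) hMx
    have key : star x ⬝ᵥ (Mᵀ * Sig * M) *ᵥ x = star (M *ᵥ x) ⬝ᵥ Sig *ᵥ (M *ᵥ x) := by
      simp only [star_trivial, ← mulVec_mulVec]
      rw [dotProduct_mulVec x Mᵀ, vecMul_transpose]
    rw [key]
    exact hpos

/-- The posterior mean `x_m = x₀ + Σ₀ Aᵀ S Λ⁻¹ Sᵀ r₀` reproduces the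
observed information exactly: `Sᵀ A x_m = Sᵀ b`. -/
theorem posterior_mean_reproduces_information
    (d m : ℕ) (hm : m ≤ d)
    (A : Matrix (Fin d) (Fin d) ℝ) (hA : IsUnit A)
    (b : Fin d → ℝ)
    (Sigma0 : Matrix (Fin d) (Fin d) ℝ) (hSigma0 : Sigma0.PosDef)
    (x0 : Fin d → ℝ)
    (S : Matrix (Fin d) (Fin m) ℝ)
    (hS : LinearIndependent ℝ (fun j : Fin m => fun i : Fin d => S i j))
    (Λm : Matrix (Fin m) (Fin m) ℝ) (hΛm : Λm = Sᵀ * A * Sigma0 * Aᵀ * S)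
    (r0 : Fin d → ℝ) (hr0 : r0 = b - A *ᵥ x0)
    (xm : Fin d → ℝ)
    (hxm : xm = x0 + (Sigma0 * Aᵀ * S * Λm⁻¹ * Sᵀ) *ᵥ r0) :
    Sᵀ *ᵥ (A *ᵥ xm) = Sᵀ *ᵥ b := by
  have hSinj : Function.Injective S.mulVec := by
    rw [Matrix.mulVec_injective_iff]
    exact hS
  have hAT : IsUnit Aᵀ := by
    rw [Matrix.isUnit_iff_isUnit_det, Matrix.det_transpose]
    exact (Matrix.isUnit_iff_isUnit_det A).mp hA
  have hATinj : Function.Injective (Aᵀ).mulVec :=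
    Matrix.mulVec_injective_iff_isUnit.mpr hAT
  have hMinj : Function.Injective (Aᵀ * S).mulVec := by
    intro u v huv
    apply hSinj
    apply hATinj
    simpa [Matrix.mulVec_mulVec] using huv
  have hΛpd : Λm.PosDef := by
    have h := transpose_mul_posdef_mul Sigma0 hSigma0 (Aᵀ * S) hMinj
    have he : (Aᵀ * S)ᵀ * Sigma0 * (Aᵀ * S) = Λm := by
      rw [hΛm]
      simp only [Matrix.transpose_mul, Matrix.transpose_transpose, Matrix.mul_assoc]
    rwa [he] at h
  have hΛunit : IsUnit Λm := hΛpd.isUnit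
  have hinv : Λm * Λm⁻¹ = 1 := Matrix.mul_nonsing_inv _ ((Matrix.isUnit_iff_isUnit_det Λm).mp hΛunit)
  rw [hxm, Matrix.mulVec_add, Matrix.mulVec_add]
  have key : Sᵀ *ᵥ (A *ᵥ ((Sigma0 * Aᵀ * S * Λm⁻¹ * Sᵀ) *ᵥ r0)) = Sᵀ *ᵥ r0 := by
    rw [Matrix.mulVec_mulVec, Matrix.mulVec_mulVec]
    have h2 : Sᵀ * (A * (Sigma0 * Aᵀ * S * Λm⁻¹ * Sᵀ)) = Sᵀ := by
      have h3 : Sᵀ * (A * (Sigma0 * Aᵀ * S * Λm⁻¹ * Sᵀ))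
          = (Sᵀ * A * Sigma0 * Aᵀ * S) * (Λm⁻¹ * Sᵀ) := by
        simp only [Matrix.mul_assoc]
      rw [h3, ← hΛm, ← Matrix.mul_assoc, hinv, Matrix.one_mul]
    rw [show Sᵀ * A * (Sigma0 * Aᵀ * S * Λm⁻¹ * Sᵀ) = Sᵀ * (A * (Sigma0 * Aᵀ * S * Λm⁻¹ * Sᵀ)) from by simp only [Matrix.mul_assoc], h2]
  rw [key, hr0]
  simp [Matrix.mulVec_sub]
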